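/- Let D be a k-connected tournament on 2k+1 vertices, and let G be the bipartite graph with vertices x⁺, x⁻ for each vertex x of D, where x⁺ is adjacent to y⁻ iff x = y or D has a directed edge from x to y. Then G is (k+1)-connected, and in the complement of G, for each x, the pair {x⁺, x⁻} is an independent set, and the union of any two distinct such pairs induces a connected graph (a path of length 3); hence {{x⁺,x⁻} : x ∈ V(D)} is a Kempe-coloring of the complement of G of size 2k+1. -/

import Mathlib

open SimpleGraph

/-- `A` is an anticlique (independent set) of `G`. -/
def IsAnticlique {V : Type*} (G : SimpleGraph V) (A : Finset V) : Prop :=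
  ∀ x ∈ A, ∀ y ∈ A, ¬ G.Adj x y

/-- A coloring of `G`: a partition of the vertex set into nonempty anticliques. -/
def IsColoring {V : Type*} (G : SimpleGraph V) (c : Finset (Finset V)) : Prop :=
  (∀ A ∈ c, A.Nonempty) ∧
  (∀ A ∈ c, ∀ B ∈ c, A ≠ B → Disjoint A B) ∧
  (∀ v : V, ∃ A ∈ c, v ∈ A) ∧
  (∀ A ∈ c, IsAnticlique G A)

/-- `A` induces a connected subgraph of `G`. -/
def ConnSet {V : Type*} (G : SimpleGraph V) (A : Finset V) : Prop :=
  (G.induce (↑A : Set V)).Connected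

/-- A Kempe-coloring: any two distinct classes induce a connected subgraph. -/
def IsKempe {V : Type*} [DecidableEq V] (G : SimpleGraph V) (c : Finset (Finset V)) : Prop :=
  IsColoring G c ∧ ∀ A ∈ c, ∀ B ∈ c, A ≠ B → ConnSet G (A ∪ B)

/-- Two vertex sets are adjacent if some edge joins them. -/
def SetsAdj {V : Type*} (G : SimpleGraph V) (A B : Finset V) : Prop :=
  ∃ a ∈ A, ∃ b ∈ B, G.Adj a b

/-- A clique minor: pairwise disjoint, pairwise adjacent, nonempty connected subsets. -/
def IsCliqueMinor {V : Type*} (G : SimpleGraph V) (K : Finset (Finset V)) : Prop :=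
  (∀ A ∈ K, A.Nonempty) ∧ (∀ A ∈ K, ConnSet G A) ∧
  (∀ A ∈ K, ∀ B ∈ K, A ≠ B → Disjoint A B ∧ SetsAdj G A B)

/-- A shallow clique minor: a clique minor all of whose branch sets have size 1 or 2. -/
def IsShallowCliqueMinor {V : Type*} (G : SimpleGraph V) (K : Finset (Finset V)) : Prop :=
  IsCliqueMinor G K ∧ ∀ A ∈ K, A.card ≤ 2

/-- `T` is a transversal of the family `K`: it meets each member in exactly one vertex. -/
def Traversed {V : Type*} [DecidableEq V] (T : Finset V) (K : Finset (Finset V)) : Prop :=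
  ∀ A ∈ K, (T ∩ A).card = 1

/-- `c` is a coloring of `G` of minimum size, i.e. of size `χ(G)`. -/
def MinColoring {V : Type*} (G : SimpleGraph V) (c : Finset (Finset V)) : Prop :=
  IsColoring G c ∧ ∀ d, IsColoring G d → c.card ≤ d.card

/-- `G` has no antitriangle (independent set of size 3). -/
def HasNoAntitriangle {V : Type*} (G : SimpleGraph V) : Prop :=
  ¬ ∃ A : Finset V, A.card = 3 ∧ IsAnticlique G A

/-- The bipartite graph obtained from a tournament `r` on `X`: vertices `x⁺ = inl x`
and `x⁻ = inr x`, with `x⁺` adjacent to `y⁻` iff `x = y` or there is a directed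
edge from `x` to `y`. -/
def tournamentGraph {X : Type*} (r : X → X → Prop) : SimpleGraph (X ⊕ X) :=
  SimpleGraph.fromRel (fun a b =>
    ∃ x y : X, a = Sum.inl x ∧ b = Sum.inr y ∧ (x = y ∨ r x y))

private lemma tkm_escape_out {X : Type*} [Fintype X] [DecidableEq X] {k : ℕ}
    {r : X → X → Prop}
    (hcard : Fintype.card X = 2 * k + 1) (hirr : ∀ x, ¬ r x x)
    (hconn : ∀ S : Finset X, S.card < k → ∀ a b : X, a ∉ S → b ∉ S →
      Relation.ReflTransGen (fun u v => r u v ∧ u ∉ S ∧ v ∉ S) a b)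
    (F : Finset X) (hF : F.card ≤ k) (a : X) :
    ∃ w, w ∉ F ∧ (a = w ∨ r a w) := by
  by_cases ha : a ∈ F
  · by_contra hcon
    push_neg at hcon
    obtain ⟨b, hb⟩ : ∃ b, b ∉ F := by
      by_contra h
      push_neg at h
      have : (Finset.univ : Finset X).card ≤ F.card :=
        Finset.card_le_card (fun x _ => h x)
      rw [Finset.card_univ, hcard] at this
      omega
    have hcard1 : 1 ≤ F.card := Finset.card_pos.2 ⟨a, ha⟩
    have hS : (F.erase a).card < k := by
      rw [Finset.card_erase_of_mem ha]; omega
    have haS : a ∉ F.erase a := Finset.notMem_erase a F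
    have hbS : b ∉ F.erase a := fun h => hb (Finset.mem_of_mem_erase h)
    have hpath := hconn _ hS a b haS hbS
    rcases hpath.cases_head with rfl | ⟨z, ⟨hz1, _, hz3⟩, _⟩
    · exact hb ha
    · by_cases hzF : z ∈ F
      · have hz : z = a := by
          by_contra hne
          exact hz3 (Finset.mem_erase.2 ⟨hne, hzF⟩)
        exact hirr a (hz ▸ hz1)
      · exact (hcon z hzF).2 hz1
  · exact ⟨a, ha, Or.inl rfl⟩

private lemma tkm_escape_in {X : Type*} [Fintype X] [DecidableEq X] {k : ℕ}
    {r : X → X → Prop}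
    (hcard : Fintype.card X = 2 * k + 1) (hirr : ∀ x, ¬ r x x)
    (hconn : ∀ S : Finset X, S.card < k → ∀ a b : X, a ∉ S → b ∉ S →
      Relation.ReflTransGen (fun u v => r u v ∧ u ∉ S ∧ v ∉ S) a b)
    (F : Finset X) (hF : F.card ≤ k) (a : X) :
    ∃ w, w ∉ F ∧ (a = w ∨ r w a) := by
  by_cases ha : a ∈ F
  · by_contra hcon
    push_neg at hcon
    obtain ⟨b, hb⟩ : ∃ b, b ∉ F := by
      by_contra h
      push_neg at h
      have : (Finset.univ : Finset X).card ≤ F.card :=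
        Finset.card_le_card (fun x _ => h x)
      rw [Finset.card_univ, hcard] at this
      omega
    have hcard1 : 1 ≤ F.card := Finset.card_pos.2 ⟨a, ha⟩
    have hS : (F.erase a).card < k := by
      rw [Finset.card_erase_of_mem ha]; omega
    have haS : a ∉ F.erase a := Finset.notMem_erase a F
    have hbS : b ∉ F.erase a := fun h => hb (Finset.mem_of_mem_erase h)
    have hpath := hconn _ hS b a hbS haS
    rcases hpath.cases_tail with rfl | ⟨z, _, hz1, hz3, _⟩
    · exact hb ha
    · by_cases hzF : z ∈ F
      · have hz : z = a := by
          by_contra hne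
          exact hz3 (Finset.mem_erase.2 ⟨hne, hzF⟩)
        exact hirr a (hz ▸ hz1)
      · exact (hcon z hzF).2 hz1
  · exact ⟨a, ha, Or.inl rfl⟩

private lemma tkm_induce_adj {V : Type*} (G : SimpleGraph V) (s : Set V) (u v : ↥s) :
    (G.induce s).Adj u v ↔ G.Adj u.val v.val := Iff.rfl

private lemma tkm_path_iso {X : Type*} [DecidableEq X] (r : X → X → Prop) (x y : X)
    (hxy : x ≠ y) (hr : r x y) (hyx : ¬ r y x) (hirr : ∀ z, ¬ r z z) :
    Nonempty ((tournamentGraph r)ᶜ.induce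
      (↑(({Sum.inl x, Sum.inr x} ∪ {Sum.inl y, Sum.inr y}) : Finset (X ⊕ X)) :
        Set (X ⊕ X)) ≃g SimpleGraph.pathGraph 4) := by
  set A : Finset (X ⊕ X) := ({Sum.inl x, Sum.inr x} ∪ {Sum.inl y, Sum.inr y}) with hA
  have m0 : (Sum.inl x : X ⊕ X) ∈ (↑A : Set (X ⊕ X)) := by simp [hA]
  have m1 : (Sum.inl y : X ⊕ X) ∈ (↑A : Set (X ⊕ X)) := by simp [hA]
  have m2 : (Sum.inr x : X ⊕ X) ∈ (↑A : Set (X ⊕ X)) := by simp [hA]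
  have m3 : (Sum.inr y : X ⊕ X) ∈ (↑A : Set (X ⊕ X)) := by simp [hA]
  let f : Fin 4 → (↑A : Set (X ⊕ X)) := ![⟨_, m0⟩, ⟨_, m1⟩, ⟨_, m2⟩, ⟨_, m3⟩]
  have hbij : Function.Bijective f := by
    constructor
    · intro i j h
      fin_cases i <;> fin_cases j <;> simp_all [f, hxy, hxy.symm]
    · rintro ⟨v, hv⟩
      simp only [hA, Finset.coe_union, Set.mem_union, Finset.coe_insert,
        Set.mem_insert_iff, Finset.coe_singleton, Set.mem_singleton_iff] at hv
      rcases hv with (rfl | rfl) | (rfl | rfl)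
      · exact ⟨0, rfl⟩
      · exact ⟨2, rfl⟩
      · exact ⟨1, rfl⟩
      · exact ⟨3, rfl⟩
  refine ⟨(SimpleGraph.Iso.symm ⟨Equiv.ofBijective f hbij, ?_⟩ :)⟩
  intro a b
  fin_cases a <;> fin_cases b <;>
    simp [f, Equiv.ofBijective_apply, pathGraph_adj, tkm_induce_adj, tournamentGraph, compl_adj,
      hxy, hxy.symm, hr, hyx, hirr x, hirr y, Ne, Sum.inl.injEq, Sum.inr.injEq, Function.Embedding.coe_subtype, Subtype.ext_iff] <;> decide

private lemma tkm_adj_lr {X : Type*} (r : X → X → Prop) (a b : X) :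
    (tournamentGraph r).Adj (Sum.inl a) (Sum.inr b) ↔ a = b ∨ r a b := by
  simp [tournamentGraph]

/-- for a `k`-connected tournament on `2k+1` vertices, the associated
bipartite graph `G` is `(k+1)`-connected, each pair `{x⁺, x⁻}` is independent in the
complement of `G`, any two distinct such pairs induce in the complement a path on
four vertices (a path of length 3), and the pairs form a Kempe-coloring of the
complement of size `2k+1`. -/
theorem tournament_kempe {X : Type*} [Fintype X] [DecidableEq X]
    (k : ℕ) (r : X → X → Prop)
    (hcard : Fintype.card X = 2 * k + 1)
    (hirr : ∀ x, ¬ r x x)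
    (htour : ∀ x y : X, x ≠ y → (r x y ↔ ¬ r y x))
    (hconn : ∀ S : Finset X, S.card < k → ∀ a b : X, a ∉ S → b ∉ S →
      Relation.ReflTransGen (fun u v => r u v ∧ u ∉ S ∧ v ∉ S) a b) :
    (Fintype.card (X ⊕ X) > k + 1 ∧ ∀ S : Finset (X ⊕ X), S.card < k + 1 →
      ((tournamentGraph r).induce {v : X ⊕ X | v ∉ S}).Connected) ∧
    (∀ x : X, IsAnticlique (tournamentGraph r)ᶜ
      ({Sum.inl x, Sum.inr x} : Finset (X ⊕ X))) ∧
    (∀ x y : X, x ≠ y →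
      Nonempty ((tournamentGraph r)ᶜ.induce
        (↑(({Sum.inl x, Sum.inr x} ∪ {Sum.inl y, Sum.inr y}) : Finset (X ⊕ X)) :
          Set (X ⊕ X)) ≃g SimpleGraph.pathGraph 4)) ∧
    IsKempe (tournamentGraph r)ᶜ
      (Finset.univ.image (fun x : X => ({Sum.inl x, Sum.inr x} : Finset (X ⊕ X)))) ∧
    (Finset.univ.image
      (fun x : X => ({Sum.inl x, Sum.inr x} : Finset (X ⊕ X)))).card = 2 * k + 1 := by
  classical
  have hanti : ∀ x : X, IsAnticlique (tournamentGraph r)ᶜ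
      ({Sum.inl x, Sum.inr x} : Finset (X ⊕ X)) := by
    intro x a ha b hb hadj
    rw [SimpleGraph.compl_adj] at hadj
    obtain ⟨hne, hnadj⟩ := hadj
    simp only [Finset.mem_insert, Finset.mem_singleton] at ha hb
    rcases ha with rfl | rfl <;> rcases hb with rfl | rfl
    · exact hne rfl
    · exact hnadj ((tkm_adj_lr r x x).mpr (Or.inl rfl))
    · exact hnadj ((tkm_adj_lr r x x).mpr (Or.inl rfl)).symm
    · exact hne rfl
  have hpath : ∀ x y : X, x ≠ y →
      Nonempty ((tournamentGraph r)ᶜ.induce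
        (↑(({Sum.inl x, Sum.inr x} ∪ {Sum.inl y, Sum.inr y}) : Finset (X ⊕ X)) :
          Set (X ⊕ X)) ≃g SimpleGraph.pathGraph 4) := by
    intro x y hxy
    by_cases hr : r x y
    · exact tkm_path_iso r x y hxy hr (fun h => (htour x y hxy).mp hr h) hirr
    · have hyx : r y x := by
        by_contra h
        exact hr ((htour x y hxy).mpr h)
      have h2 := tkm_path_iso r y x hxy.symm hyx
        (fun h => (htour y x hxy.symm).mp hyx h) hirr
      rwa [Finset.union_comm] at h2
  refine ⟨⟨?_, ?_⟩, hanti, hpath, ⟨⟨?_, ?_, ?_, ?_⟩, ?_⟩, ?_⟩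
  · rw [Fintype.card_sum, hcard]; omega
  · -- connectivity
    intro S hS
    have hSk : S.card ≤ k := by omega
    set G := tournamentGraph r with hG
    set s : Set (X ⊕ X) := {v | v ∉ S} with hs
    let F : Finset X := S.image (Sum.elim id id)
    have hFk : F.card ≤ k := le_trans Finset.card_image_le hSk
    have hmem : ∀ w : X, w ∉ F → Sum.inl w ∈ s ∧ Sum.inr w ∈ s := by
      intro w hw
      constructor <;> intro hc <;> exact hw (Finset.mem_image.2 ⟨_, hc, rfl⟩)
    have hAdj : ∀ (a b : X) (ha : Sum.inl a ∈ s) (hb : Sum.inr b ∈ s),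
        (a = b ∨ r a b) → (G.induce s).Adj ⟨_, ha⟩ ⟨_, hb⟩ := by
      intro a b ha hb h
      exact (tkm_adj_lr r a b).mpr h
    have key : ∀ u : ↥s, ∃ (w : X) (h1 : Sum.inl w ∈ s) (h2 : Sum.inr w ∈ s),
        (G.induce s).Reachable u ⟨_, h1⟩ ∧ (G.induce s).Reachable u ⟨_, h2⟩ := by
      rintro ⟨(a | b), hu⟩
      · obtain ⟨w, hw, hrel⟩ := tkm_escape_out hcard hirr hconn F hFk a
        obtain ⟨h1, h2⟩ := hmem w hw
        have e1 : (G.induce s).Adj ⟨Sum.inl a, hu⟩ ⟨Sum.inr w, h2⟩ := hAdj a w hu h2 hrel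
        have e2 : (G.induce s).Adj ⟨Sum.inl w, h1⟩ ⟨Sum.inr w, h2⟩ :=
          hAdj w w h1 h2 (Or.inl rfl)
        exact ⟨w, h1, h2, e1.reachable.trans e2.reachable.symm, e1.reachable⟩
      · obtain ⟨w, hw, hrel⟩ := tkm_escape_in hcard hirr hconn F hFk b
        obtain ⟨h1, h2⟩ := hmem w hw
        have e1 : (G.induce s).Adj ⟨Sum.inl w, h1⟩ ⟨Sum.inr b, hu⟩ :=
          hAdj w b h1 hu (by tauto)
        have e2 : (G.induce s).Adj ⟨Sum.inl w, h1⟩ ⟨Sum.inr w, h2⟩ :=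
          hAdj w w h1 h2 (Or.inl rfl)
        exact ⟨w, h1, h2, e1.reachable.symm, e1.reachable.symm.trans e2.reachable⟩
    rw [SimpleGraph.connected_iff]
    constructor
    · intro u v
      obtain ⟨wu, hu1, hu2, hru1, hru2⟩ := key u
      obtain ⟨wv, hv1, hv2, hrv1, hrv2⟩ := key v
      by_cases hww : wu = wv
      · subst hww; exact hru1.trans hrv1.symm
      · by_cases hr' : r wu wv
        · have e : (G.induce s).Adj ⟨Sum.inl wu, hu1⟩ ⟨Sum.inr wv, hv2⟩ :=
            hAdj _ _ _ _ (Or.inr hr')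
          exact (hru1.trans e.reachable).trans hrv2.symm
        · have hr'' : r wv wu := by
            by_contra h; exact hr' ((htour wu wv hww).mpr h)
          have e : (G.induce s).Adj ⟨Sum.inl wv, hv1⟩ ⟨Sum.inr wu, hu2⟩ :=
            hAdj _ _ _ _ (Or.inr hr'')
          exact (hru2.trans e.reachable.symm).trans hrv1.symm
    · obtain ⟨w, hw⟩ : ∃ w : X, w ∉ F := by
        by_contra h; push_neg at h
        have h2 : (Finset.univ : Finset X).card ≤ F.card :=
          Finset.card_le_card fun z _ => h z
        rw [Finset.card_univ, hcard] at h2; omega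
      exact ⟨⟨Sum.inl w, (hmem w hw).1⟩⟩
  · -- nonempty classes
    intro A hA
    obtain ⟨x, -, rfl⟩ := Finset.mem_image.1 hA
    exact ⟨Sum.inl x, by simp⟩
  · -- pairwise disjoint
    intro A hA B hB hAB
    obtain ⟨x, -, rfl⟩ := Finset.mem_image.1 hA
    obtain ⟨y, -, rfl⟩ := Finset.mem_image.1 hB
    have hxy : x ≠ y := fun h => hAB (by rw [h])
    rw [Finset.disjoint_left]
    intro a haA haB
    simp only [Finset.mem_insert, Finset.mem_singleton] at haA haB
    rcases haA with rfl | rfl <;> rcases haB with h | h <;> simp_all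
  · -- cover
    intro v
    rcases v with a | a
    · exact ⟨_, Finset.mem_image_of_mem _ (Finset.mem_univ a), by simp⟩
    · exact ⟨_, Finset.mem_image_of_mem _ (Finset.mem_univ a), by simp⟩
  · -- anticliques
    intro A hA
    obtain ⟨x, -, rfl⟩ := Finset.mem_image.1 hA
    exact hanti x
  · -- unions connected
    intro A hA B hB hAB
    obtain ⟨x, -, rfl⟩ := Finset.mem_image.1 hA
    obtain ⟨y, -, rfl⟩ := Finset.mem_image.1 hB
    have hxy : x ≠ y := fun h => hAB (by rw [h])
    obtain ⟨iso⟩ := hpath x y hxy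
    exact iso.connected_iff.mpr (pathGraph_connected 3)
  · -- cardinality
    have hinj : Function.Injective
        (fun x : X => ({Sum.inl x, Sum.inr x} : Finset (X ⊕ X))) := by
      intro a b h
      have h' : ({Sum.inl a, Sum.inr a} : Finset (X ⊕ X)) = {Sum.inl b, Sum.inr b} := h
      have h2 : (Sum.inl a : X ⊕ X) ∈ ({Sum.inl b, Sum.inr b} : Finset (X ⊕ X)) := by
        rw [← h']; exact Finset.mem_insert_self _ _
      simpa using h2
    rw [Finset.card_image_of_injective _ hinj, Finset.card_univ, hcard]
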